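/- Let (W,S) be a finite (spherical) Coxeter system with longest element w₀, and let φ be a weight function with φ(s) ≥ 0 for all s ∈ S. Then sup_{x∈W} φ(x) = φ(w₀), and the set of x ∈ W attaining this maximum equals the coset w₀ W_φ⁰, where W_φ⁰ is the parabolic subgroup generated by {s ∈ S : φ(s) = 0}. -/

import Mathlib

open List

namespace SphericalAux

variable {B W : Type*} [Group W] {M : CoxeterMatrix B} (cs : CoxeterSystem M W)

noncomputable local instance : DecidableEq W := Classical.decEq W

/-- The Bourbaki sign permutation attached to a simple generator. -/
noncomputable def sigmaFun (i : B) : W × ZMod 2 → W × ZMod 2 :=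
  fun p => (cs.simple i * p.1 * cs.simple i, p.2 + if p.1 = cs.simple i then 1 else 0)

lemma sigmaFun_invol (i : B) : Function.Involutive (sigmaFun cs i) := by
  rintro ⟨t, ε⟩
  simp only [sigmaFun]
  have h1 : cs.simple i * (cs.simple i * t * cs.simple i) * cs.simple i = t := by
    rw [← mul_assoc, ← mul_assoc, cs.simple_mul_simple_self, one_mul, mul_assoc,
      cs.simple_mul_simple_self, mul_one]
  have h2 : (cs.simple i * t * cs.simple i = cs.simple i) ↔ (t = cs.simple i) := by
    constructor
    · intro h
      have := congrArg (fun z => cs.simple i * z * cs.simple i) h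
      rw [h1] at this
      rw [this, cs.simple_mul_simple_self, one_mul]
    · rintro rfl; rw [cs.simple_mul_simple_self, one_mul]
  have h11 : (1 + 1 : ZMod 2) = 0 := by decide
  ext
  · exact h1
  · show ε + (if t = cs.simple i then 1 else 0)
      + (if cs.simple i * t * cs.simple i = cs.simple i then 1 else 0) = ε
    rw [if_congr h2 rfl rfl]
    by_cases h : t = cs.simple i
    · rw [if_pos h, add_assoc, h11, add_zero]
    · rw [if_neg h, add_zero, add_zero]

noncomputable def sigma (i : B) : Equiv.Perm (W × ZMod 2) :=
  Function.Involutive.toPerm _ (sigmaFun_invol cs i)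

lemma sigma_apply (i : B) (p : W × ZMod 2) :
    sigma cs i p = (cs.simple i * p.1 * cs.simple i, p.2 + if p.1 = cs.simple i then 1 else 0) :=
  rfl

/-- The permutation attached to a word. -/
noncomputable def Fw (ω : List B) : Equiv.Perm (W × ZMod 2) := (ω.map (sigma cs)).prod

@[simp] lemma Fw_nil : Fw cs ([] : List B) = 1 := rfl

lemma Fw_cons (i : B) (ω : List B) : Fw cs (i :: ω) = sigma cs i * Fw cs ω := by
  simp [Fw]

lemma Fw_apply (ω : List B) (t : W) (ε : ZMod 2) :
    Fw cs ω (t, ε) = (cs.wordProd ω * t * (cs.wordProd ω)⁻¹,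
      ε + ((cs.rightInvSeq ω).count t : ZMod 2)) := by
  induction ω generalizing ε with
  | nil => simp
  | cons i ω ih =>
    rw [Fw_cons, Equiv.Perm.mul_apply, ih, sigma_apply]
    have hris : cs.rightInvSeq (i :: ω) =
        ((cs.wordProd ω)⁻¹ * cs.simple i * cs.wordProd ω) :: cs.rightInvSeq ω := rfl
    have hcond : (cs.wordProd ω * t * (cs.wordProd ω)⁻¹ = cs.simple i) ↔
        ((cs.wordProd ω)⁻¹ * cs.simple i * cs.wordProd ω = t) := by
      constructor
      · intro h; rw [← h]; group
      · intro h; rw [← h]; group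
    ext
    · show cs.simple i * (cs.wordProd ω * t * (cs.wordProd ω)⁻¹) * cs.simple i
        = cs.wordProd (i :: ω) * t * (cs.wordProd (i :: ω))⁻¹
      rw [cs.wordProd_cons, mul_inv_rev, cs.inv_simple]
      group
    · show ε + ((cs.rightInvSeq ω).count t : ZMod 2)
        + (if cs.wordProd ω * t * (cs.wordProd ω)⁻¹ = cs.simple i then 1 else 0)
        = ε + ((cs.rightInvSeq (i :: ω)).count t : ZMod 2)
      rw [hris, List.count_cons]
      push_cast
      rw [if_congr hcond rfl rfl]
      by_cases hc : (cs.wordProd ω)⁻¹ * cs.simple i * cs.wordProd ω = t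
      · rw [if_pos hc, if_pos (beq_iff_eq.mpr hc)]
        push_cast
        ring
      · rw [if_neg hc, if_neg (by simpa using hc)]
        push_cast
        ring

lemma semiconj_pow (a b : W) (r : ℕ) : b * (a * b) ^ r = (b * a) ^ r * b :=
  SemiconjBy.pow_right (by show b * (a * b) = (b * a) * b; group) r

/-- Explicit formula for the right inversion sequence of an alternating word. -/
lemma ris_alternatingWord (n : ℕ) (i j : B) :
    cs.rightInvSeq (CoxeterSystem.alternatingWord i j n) =
      (List.range n).map
        (fun k => (cs.simple j * cs.simple i) ^ (n - 1 - k) * cs.simple j) := by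
  induction n generalizing i j with
  | zero => simp [CoxeterSystem.alternatingWord]
  | succ n ih =>
    rw [CoxeterSystem.alternatingWord_succ, cs.rightInvSeq_concat, ih j i]
    rw [List.range_succ, List.map_append, List.map_map, List.concat_eq_append]
    congr 1
    · apply List.map_congr_left
      intro k hk
      rw [List.mem_range] at hk
      have hr : n + 1 - 1 - k = (n - 1 - k) + 1 := by omega
      show (MulAut.conj (cs.simple j))
          ((cs.simple i * cs.simple j) ^ (n - 1 - k) * cs.simple i)
        = (cs.simple j * cs.simple i) ^ (n + 1 - 1 - k) * cs.simple j
      rw [MulAut.conj_apply, cs.inv_simple, hr]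
      rw [← mul_assoc, semiconj_pow, pow_succ]
      group
    · simp

/-- Every element appears an even number of times in the right inversion sequence of
the doubled braid word. -/
lemma count_ris_braid_even (i j : B) (t : W) :
    Even ((cs.rightInvSeq (CoxeterSystem.alternatingWord i j (2 * M i j))).count t) := by
  rw [ris_alternatingWord]
  set m := M i j with hm
  have h2m : 2 * m = m + m := by ring
  rw [h2m, List.range_add, List.map_append, List.count_append, List.map_map]
  have : ((List.range m).map
      ((fun k => (cs.simple j * cs.simple i) ^ (m + m - 1 - k) * cs.simple j) ∘ (m + ·)))
      = (List.range m).map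
      (fun k => (cs.simple j * cs.simple i) ^ (m + m - 1 - k) * cs.simple j) := by
    apply List.map_congr_left
    intro k hk
    rw [List.mem_range] at hk
    show (cs.simple j * cs.simple i) ^ (m + m - 1 - (m + k)) * cs.simple j
      = (cs.simple j * cs.simple i) ^ (m + m - 1 - k) * cs.simple j
    have h1 : m + m - 1 - k = m + (m - 1 - k) := by omega
    have h2 : m + m - 1 - (m + k) = m - 1 - k := by omega
    rw [h1, h2, pow_add, cs.simple_mul_simple_pow' i j, one_mul]
  rw [this]
  exact ⟨_, by ring⟩

lemma isLiftable_sigma : M.IsLiftable (sigma cs) := by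
  intro i j
  have hpow : ∀ m : ℕ, (sigma cs i * sigma cs j) ^ m =
      Fw cs (CoxeterSystem.alternatingWord i j (2 * m)) := by
    intro m
    induction m with
    | zero => simp [CoxeterSystem.alternatingWord]
    | succ m ih =>
      have h1 : 2 * (m + 1) = (2 * m) + 1 + 1 := by ring
      rw [h1, CoxeterSystem.alternatingWord_succ', CoxeterSystem.alternatingWord_succ']
      have he : ¬ Even (2 * m + 1) := by simp [Nat.even_add_one]
      have he2 : Even (2 * m) := ⟨m, by ring⟩
      rw [if_neg he, if_pos he2, Fw_cons, Fw_cons, ← ih, pow_succ', mul_assoc]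
  rw [hpow]
  ext ⟨t, ε⟩
  · rw [Fw_apply]
    show cs.wordProd _ * t * (cs.wordProd _)⁻¹ = t
    rw [cs.prod_alternatingWord_eq_mul_pow]
    have : 2 * M i j / 2 = M i j := by omega
    rw [if_pos ⟨M i j, by ring⟩, this, one_mul, cs.simple_mul_simple_pow]
    simp
  · rw [Fw_apply]
    show ε + _ = ε
    obtain ⟨c, hc⟩ := count_ris_braid_even cs i j t
    rw [hc]
    push_cast
    ring_nf
    rw [show ((2 : ZMod 2) = 0) from rfl]
    ring

/-- The sign homomorphism `W →* Perm (W × ZMod 2)`. -/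
noncomputable def signHom : W →* Equiv.Perm (W × ZMod 2) :=
  cs.lift ⟨sigma cs, isLiftable_sigma cs⟩

lemma signHom_wordProd (ω : List B) : signHom cs (cs.wordProd ω) = Fw cs ω := by
  induction ω with
  | nil => simp [Fw]
  | cons i ω ih =>
    rw [cs.wordProd_cons, map_mul, ih, Fw_cons, signHom,
      cs.lift_apply_simple (isLiftable_sigma cs) i]

/-- The parity of the number of occurrences of `t` in the inversion sequence of any word
for `w`. -/
noncomputable def nu (w t : W) : ZMod 2 := ((signHom cs w) (t, 0)).2

lemma nu_count (ω : List B) (t : W) :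
    nu cs (cs.wordProd ω) t = ((cs.rightInvSeq ω).count t : ZMod 2) := by
  rw [nu, signHom_wordProd, Fw_apply, zero_add]

lemma signHom_apply (w t : W) (ε : ZMod 2) :
    (signHom cs w) (t, ε) = (w * t * w⁻¹, ε + nu cs w t) := by
  obtain ⟨ω, rfl⟩ := cs.wordProd_surjective w
  rw [signHom_wordProd, Fw_apply, nu_count]

lemma nu_cocycle (w v t : W) : nu cs (w * v) t = nu cs v t + nu cs w (v * t * v⁻¹) := by
  have h := congrArg (fun f => (f (t, (0 : ZMod 2))).2) (map_mul (signHom cs) w v)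
  simp only [Equiv.Perm.mul_apply] at h
  rw [signHom_apply, signHom_apply, signHom_apply] at h
  simpa [zero_add] using h

lemma nu_one (t : W) : nu cs 1 t = 0 := by
  simp [nu]

lemma nu_simple (i : B) (t : W) :
    nu cs (cs.simple i) t = if t = cs.simple i then 1 else 0 := by
  rw [nu, signHom, cs.lift_apply_simple (isLiftable_sigma cs) i, sigma_apply]
  simp

lemma nu_reflection_self {t : W} (ht : cs.IsReflection t) : nu cs t t = 1 := by
  obtain ⟨u, i, rfl⟩ := ht
  set t := u * cs.simple i * u⁻¹ with hts
  have key : u⁻¹ * t * u = cs.simple i := by rw [hts]; group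
  have h0 : nu cs u⁻¹ t + nu cs u (cs.simple i) = 0 := by
    have := nu_cocycle cs u u⁻¹ t
    rw [mul_inv_cancel] at this
    rw [nu_one] at this
    rw [show u⁻¹ * t * u⁻¹⁻¹ = u⁻¹ * t * u by group, key] at this
    linear_combination -this
  have h1 : t = u * (cs.simple i * u⁻¹) := by rw [hts, mul_assoc]
  rw [h1, nu_cocycle]
  have h2 : cs.simple i * u⁻¹ * (u * (cs.simple i * u⁻¹)) * (cs.simple i * u⁻¹)⁻¹
      = cs.simple i := by group
  rw [← h1] at h2 ⊢
  rw [h2, nu_cocycle, nu_simple]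
  rw [show u⁻¹ * t * u⁻¹⁻¹ = u⁻¹ * t * u by group, key]
  rw [if_pos rfl]
  linear_combination h0

lemma zmod2_cases (x : ZMod 2) : x = 0 ∨ x = 1 := by revert x; decide

/-- A reflection `t` is a right inversion of `w` iff `ν w t = 1`. -/
lemma isRightInversion_iff_nu {w t : W} (ht : cs.IsReflection t) :
    cs.IsRightInversion w t ↔ nu cs w t = 1 := by
  constructor
  · rintro ⟨-, hlt⟩
    have hvt : nu cs (w * t) t = 0 := by
      rcases zmod2_cases (nu cs (w * t) t) with h | h
      · exact h
      · exfalso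
        obtain ⟨ω, hred, hπ⟩ := cs.exists_reduced_word' (w * t)
        rw [hπ, nu_count] at h
        have hmem : t ∈ cs.rightInvSeq ω := by
          apply List.count_pos_iff.mp
          by_contra hc
          push_neg at hc
          rw [Nat.le_zero.mp hc] at h
          simp at h
        have hinv := cs.isRightInversion_of_mem_rightInvSeq hred hmem
        rw [← hπ] at hinv
        have := hinv.2
        rw [mul_assoc, ht.mul_self, mul_one] at this
        omega
    have h1 : w = (w * t) * t := by rw [mul_assoc, ht.mul_self, mul_one]
    rw [h1, nu_cocycle, nu_reflection_self cs ht,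
      show t * t * t⁻¹ = t by group, hvt, add_zero]
  · intro h
    obtain ⟨ω, hred, hπ⟩ := cs.exists_reduced_word' w
    rw [hπ, nu_count] at h
    have hmem : t ∈ cs.rightInvSeq ω := by
      apply List.count_pos_iff.mp
      by_contra hc
      push_neg at hc
      rw [Nat.le_zero.mp hc] at h
      simp at h
    have := cs.isRightInversion_of_mem_rightInvSeq hred hmem
    rwa [← hπ] at this

section Counting

variable [Fintype W]

noncomputable local instance (w : W) : DecidablePred (fun t => cs.IsRightInversion w t) :=
  fun _ => Classical.propDecidable _

noncomputable local instance : DecidablePred (fun t : W => cs.IsReflection t) :=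
  fun _ => Classical.propDecidable _

lemma card_inversions (w : W) :
    (Finset.univ.filter (fun t => cs.IsRightInversion w t)).card = cs.length w := by
  classical
  obtain ⟨ω, hred, rfl⟩ := cs.exists_reduced_word' w
  have hset : Finset.univ.filter (fun t => cs.IsRightInversion (cs.wordProd ω) t)
      = (cs.rightInvSeq ω).toFinset := by
    ext t
    simp only [Finset.mem_filter, Finset.mem_univ, true_and, List.mem_toFinset]
    constructor
    · intro h
      have h1 := (isRightInversion_iff_nu cs h.1).mp h
      rw [nu_count] at h1
      apply List.count_pos_iff.mp
      by_contra hc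
      push_neg at hc
      rw [Nat.le_zero.mp hc] at h1
      simp at h1
    · exact fun h => cs.isRightInversion_of_mem_rightInvSeq hred h
  rw [hset, List.toFinset_card_of_nodup hred.nodup_rightInvSeq, cs.length_rightInvSeq]
  exact hred.symm

lemma nu_w0_eq_one {w₀ : W} (hw₀ : ∀ x, cs.length x ≤ cs.length w₀) {t : W}
    (ht : cs.IsReflection t) : nu cs w₀ t = 1 := by
  apply (isRightInversion_iff_nu cs ht).mp
  refine ⟨ht, ?_⟩
  have hne := ht.length_mul_left_ne w₀
  have := hw₀ (w₀ * t)
  omega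

lemma length_identity {w₀ : W} (hw₀ : ∀ x, cs.length x ≤ cs.length w₀) (x : W) :
    cs.length x + cs.length (x⁻¹ * w₀) = cs.length w₀ := by
  classical
  set u := x⁻¹ * w₀ with hu
  set T : Finset W := Finset.univ.filter (fun t => cs.IsReflection t) with hT
  have hw0card : cs.length w₀ = T.card := by
    rw [← card_inversions cs w₀]
    congr 1
    ext t
    simp only [hT, Finset.mem_filter, Finset.mem_univ, true_and]
    constructor
    · exact fun h => h.1
    · intro h
      refine ⟨h, ?_⟩
      have h1 := h.length_mul_left_ne w₀
      have h2 := hw₀ (w₀ * t)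
      omega
  have hxor : ∀ t : W, cs.IsReflection t →
      nu cs u t + nu cs x (u * t * u⁻¹) = 1 := by
    intro t ht
    have h := nu_cocycle cs x u t
    rw [show x * u = w₀ by rw [hu]; group] at h
    rw [nu_w0_eq_one cs hw₀ ht] at h
    exact h.symm
  have hcardu : (T.filter (fun t => nu cs u t = 1)).card = cs.length u := by
    rw [← card_inversions cs u]
    congr 1
    ext t
    simp only [hT, Finset.mem_filter, Finset.mem_univ, true_and, Finset.filter_filter]
    constructor
    · rintro ⟨h1, h2⟩
      exact (isRightInversion_iff_nu cs h1).mpr h2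
    · intro h
      exact ⟨h.1, (isRightInversion_iff_nu cs h.1).mp h⟩
  have hcardx : (T.filter (fun t => ¬ nu cs u t = 1)).card = cs.length x := by
    rw [← card_inversions cs x]
    apply Finset.card_bij' (fun t _ => u * t * u⁻¹) (fun t' _ => u⁻¹ * t' * u)
    · intro t ht
      simp only [hT, Finset.mem_filter, Finset.mem_univ, true_and, Finset.filter_filter] at ht
      obtain ⟨h1, h2⟩ := ht
      simp only [Finset.mem_filter, Finset.mem_univ, true_and]
      apply (isRightInversion_iff_nu cs (h1.conj u)).mpr
      have hx := hxor t h1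
      rcases zmod2_cases (nu cs u t) with h | h
      · rw [h, zero_add] at hx
        exact hx
      · exact absurd h h2
    · intro t' ht'
      simp only [Finset.mem_filter, Finset.mem_univ, true_and] at ht'
      simp only [hT, Finset.mem_filter, Finset.mem_univ, true_and, Finset.filter_filter]
      have h1 : cs.IsReflection (u⁻¹ * t' * u) := by
        have := ht'.1.conj u⁻¹
        simpa using this
      refine ⟨h1, ?_⟩
      have hx := hxor _ h1
      rw [show u * (u⁻¹ * t' * u) * u⁻¹ = t' by group] at hx
      have h2 := (isRightInversion_iff_nu cs ht'.1).mp ht'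
      rw [h2] at hx
      intro hcon
      rw [hcon] at hx
      exact one_ne_zero (by linear_combination hx : (1 : ZMod 2) = 0)
    · intro t _; group
    · intro t _; group
  have := Finset.card_filter_add_card_filter_not
    (s := T) (p := fun t => nu cs u t = 1)
  rw [hcardu, hcardx] at this
  omega

end Counting

section Phi

variable (φ : W → ℝ)
    (hφ : ∀ x y : W, cs.length (x * y) = cs.length x + cs.length y →
      φ (x * y) = φ x + φ y)

include hφ

lemma phi_one : φ 1 = 0 := by
  have := hφ 1 1 (by simp)
  simp only [mul_one] at this
  linarith

lemma phi_wordProd : ∀ {ω : List B}, cs.IsReduced ω →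
    φ (cs.wordProd ω) = (ω.map (fun i => φ (cs.simple i))).sum := by
  intro ω
  induction ω with
  | nil =>
    intro _
    simpa using phi_one cs φ hφ
  | cons i ω' ih =>
    intro hred
    have h1 : cs.length (cs.wordProd (i :: ω')) = ω'.length + 1 := by
      rw [hred]; simp
    have hlen : cs.length (cs.wordProd ω') = ω'.length := by
      have h2 := cs.length_wordProd_le ω'
      have h3 := cs.length_mul_le (cs.simple i) (cs.wordProd ω')
      rw [cs.length_simple] at h3
      rw [cs.wordProd_cons] at h1
      omega
    have hred' : cs.IsReduced ω' := hlen
    have hadd : cs.length (cs.simple i * cs.wordProd ω')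
        = cs.length (cs.simple i) + cs.length (cs.wordProd ω') := by
      rw [cs.length_simple, hlen, ← cs.wordProd_cons]
      rw [hred]
      simp only [List.length_cons]
      omega
    rw [cs.wordProd_cons, hφ _ _ hadd, List.map_cons, List.sum_cons, ih hred']

lemma phi_nonneg (hpos : ∀ i : B, 0 ≤ φ (cs.simple i)) (x : W) : 0 ≤ φ x := by
  obtain ⟨ω, hred, rfl⟩ := cs.exists_reduced_word' x
  rw [phi_wordProd cs φ hφ hred]
  apply List.sum_nonneg
  intro a ha
  rw [List.mem_map] at ha
  obtain ⟨i, -, rfl⟩ := ha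
  exact hpos i

lemma phi_mul_closure {Z : Set W} (hZ : ∀ z ∈ Z, ∃ i : B, z = cs.simple i ∧ φ (cs.simple i) = 0)
    {h : W} (hh : h ∈ Subgroup.closure Z) (y : W) : φ (y * h) = φ y := by
  induction hh using Subgroup.closure_induction generalizing y with
  | mem z hz =>
    obtain ⟨i, rfl, hi0⟩ := hZ z hz
    rcases cs.length_mul_simple y i with hc | hc
    · have := hφ y (cs.simple i) (by rw [cs.length_simple]; omega)
      rw [this, hi0, add_zero]
    · have hy : (y * cs.simple i) * cs.simple i = y := cs.simple_mul_simple_cancel_right i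
      have hlen : cs.length ((y * cs.simple i) * cs.simple i)
          = cs.length (y * cs.simple i) + cs.length (cs.simple i) := by
        rw [cs.length_simple, hy]
        omega
      have := hφ _ _ hlen
      rw [hy, hi0, add_zero] at this
      exact this.symm
  | one => simp
  | mul a b _ _ iha ihb =>
    rw [← mul_assoc, ihb, iha]
  | inv a _ iha =>
    have := iha (y * a⁻¹)
    rw [mul_assoc, inv_mul_cancel, mul_one] at this
    exact this.symm

end Phi

end SphericalAux

/-- Let `(W, S)` be a finite (spherical) Coxeter system with longest element `w₀`, and let `φ`
be a weight function on `(W, S)` with `φ s ≥ 0` for all `s ∈ S`. Then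
`sup_{x ∈ W} φ x = φ w₀` (attained), and the set of `x ∈ W` attaining this maximum equals the
coset `w₀ W_φ⁰`, where `W_φ⁰` is the parabolic subgroup generated by
`{s ∈ S : φ s = 0}`. -/
theorem spherical_bound_and_cell {B W : Type*} [Group W] [Finite W] {M : CoxeterMatrix B}
    (cs : CoxeterSystem M W)
    (w₀ : W) (hw₀ : ∀ x : W, cs.length x ≤ cs.length w₀)
    (φ : W → ℝ)
    (hφ : ∀ x y : W, cs.length (x * y) = cs.length x + cs.length y →
      φ (x * y) = φ x + φ y)
    (hpos : ∀ i : B, 0 ≤ φ (cs.simple i)) :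
    (∀ x : W, φ x ≤ φ w₀) ∧
      {x : W | φ x = φ w₀} =
        (fun y => w₀ * y) ''
          (Subgroup.closure {w : W | ∃ i : B, w = cs.simple i ∧ φ (cs.simple i) = 0} :
            Set W) := by
  open SphericalAux in
  have : Fintype W := Fintype.ofFinite W
  set Z : Set W := {w : W | ∃ i : B, w = cs.simple i ∧ φ (cs.simple i) = 0} with hZdef
  have hsplit : ∀ x : W, φ w₀ = φ x + φ (x⁻¹ * w₀) := by
    intro x
    have hlen := SphericalAux.length_identity cs hw₀ x
    have hmul : x * (x⁻¹ * w₀) = w₀ := by group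
    have hadd : cs.length (x * (x⁻¹ * w₀))
        = cs.length x + cs.length (x⁻¹ * w₀) := by rw [hmul]; omega
    have := hφ x (x⁻¹ * w₀) hadd
    rw [hmul] at this
    exact this
  have hbound : ∀ x : W, φ x ≤ φ w₀ := by
    intro x
    have h0 := SphericalAux.phi_nonneg cs φ hφ hpos (x⁻¹ * w₀)
    have := hsplit x
    linarith
  refine ⟨hbound, ?_⟩
  ext x
  simp only [Set.mem_setOf_eq, Set.mem_image, SetLike.mem_coe]
  constructor
  · intro hx
    have hu0 : φ (x⁻¹ * w₀) = 0 := by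
      have := hsplit x
      linarith
    obtain ⟨ω, hred, hπ⟩ := cs.exists_reduced_word' (x⁻¹ * w₀)
    have hsum : (ω.map (fun i => φ (cs.simple i))).sum = 0 := by
      rw [← SphericalAux.phi_wordProd cs φ hφ hred, ← hπ, hu0]
    have hall : ∀ i ∈ ω, φ (cs.simple i) = 0 := by
      intro i hi
      have h1 : ∀ a ∈ ω.map (fun i => φ (cs.simple i)), (0:ℝ) ≤ a := by
        intro a ha
        rw [List.mem_map] at ha
        obtain ⟨k, -, rfl⟩ := ha
        exact hpos k
      have h2 := List.single_le_sum h1 _ (List.mem_map_of_mem hi)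
      have h3 := h1 _ (List.mem_map_of_mem (f := fun i => φ (cs.simple i)) hi)
      rw [hsum] at h2
      linarith
    have hmemH : x⁻¹ * w₀ ∈ Subgroup.closure Z := by
      rw [hπ]
      show (ω.map cs.simple).prod ∈ Subgroup.closure Z
      apply Subgroup.list_prod_mem
      intro g hg
      rw [List.mem_map] at hg
      obtain ⟨i, hi, rfl⟩ := hg
      exact Subgroup.subset_closure ⟨i, rfl, hall i hi⟩
    refine ⟨(x⁻¹ * w₀)⁻¹, Subgroup.inv_mem _ hmemH, ?_⟩
    group
  · rintro ⟨h, hmem, rfl⟩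
    exact SphericalAux.phi_mul_closure cs φ hφ
      (fun z hz => hz) hmem w₀
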